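/- arXiv:2307.15548 — 6 statements merged into one kernel-verified Lean document; each statement's English description precedes it below -/
import Mathlib

section
/- For m₁, m₂, L > 0, one has the identity ∑_{n=1}^{∞} [ (m₁² − m₂²)/((nπ/L)² + m₂²) − log( ((nπ/L)² + m₁²)/((nπ/L)² + m₂²) ) ] = (1/2)[ (1 − m₁²/m₂²) + L(m₁² − m₂²)/(m₂ tanh(L m₂)) − 2 log( (m₂ sinh(L m₁))/(m₁ sinh(L m₂)) ) ]. -/
open Real Filter Finset

lemma sinh_euler_prod (t : ℝ) :
    Filter.Tendsto (fun N : ℕ => π * t * ∏ j ∈ Finset.range N, ((1 : ℝ) + t ^ 2 / ((j : ℝ) + 1) ^ 2))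
      atTop (nhds (Real.sinh (π * t))) := by
  have h := Complex.tendsto_euler_sin_prod (t * Complex.I)
  have h2 := h.mul_const (-Complex.I)
  have hsin : Complex.sin (↑π * (↑t * Complex.I)) * (-Complex.I)
      = ((Real.sinh (π * t) : ℝ) : ℂ) := by
    rw [← mul_assoc, ← Complex.ofReal_mul, Complex.sin_mul_I, Complex.ofReal_sinh]
    simp [mul_assoc, Complex.I_mul_I]
  rw [hsin] at h2
  have heq : (fun N : ℕ => (↑π * (↑t * Complex.I) * ∏ j ∈ Finset.range N,
      ((1 : ℂ) - (↑t * Complex.I) ^ 2 / ((j : ℂ) + 1) ^ 2)) * (-Complex.I))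
      = fun N : ℕ => ((π * t * ∏ j ∈ Finset.range N, ((1 : ℝ) + t ^ 2 / ((j : ℝ) + 1) ^ 2) : ℝ) : ℂ) := by
    funext N
    have h1 : ∀ j : ℕ, ((1 : ℂ) - (↑t * Complex.I) ^ 2 / ((j : ℂ) + 1) ^ 2)
        = ((1 : ℂ) + (t : ℂ) ^ 2 / ((j : ℂ) + 1) ^ 2) := by
      intro j
      rw [mul_pow, Complex.I_sq]
      ring
    rw [Finset.prod_congr rfl fun j _ => h1 j]
    push_cast
    set P : ℂ := ∏ j ∈ Finset.range N, ((1 : ℂ) + (t:ℂ) ^ 2 / ((j : ℂ) + 1) ^ 2) with hP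
    linear_combination (-(↑π * ↑t * P)) * Complex.I_sq
  rw [heq] at h2
  have h3 := (Complex.continuous_re.tendsto _).comp h2
  simpa only [Function.comp_def, Complex.ofReal_re] using h3

lemma base_summable : Summable (fun n : ℕ => 1 / ((n : ℝ) + 1) ^ 2) := by
  have h : Summable (fun n : ℕ => 1 / (n : ℝ) ^ 2) := by
    simpa using Real.summable_one_div_nat_pow.mpr (by norm_num : 1 < 2)
  have := (summable_nat_add_iff 1).mpr h
  simpa [add_comm] using this

lemma xsq_pos (L : ℝ) (hL : 0 < L) (n : ℕ) : 0 < (((n : ℝ) + 1) * π / L) ^ 2 := by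
  have hn : (0:ℝ) < ((n : ℝ) + 1) * π / L := by positivity
  positivity

lemma msq_div_xsq (L m : ℝ) (hL : 0 < L) (n : ℕ) :
    m ^ 2 / (((n : ℝ) + 1) * π / L) ^ 2 = (L * m / π) ^ 2 / ((n : ℝ) + 1) ^ 2 := by
  have hπ := Real.pi_ne_zero
  have hn : ((n:ℝ)+1) ≠ 0 := by positivity
  field_simp

lemma inv_xsq_summable (L m : ℝ) (hL : 0 < L) :
    Summable (fun n : ℕ => 1 / ((((n : ℝ) + 1) * π / L) ^ 2 + m ^ 2)) := by
  refine Summable.of_nonneg_of_le (fun n => by positivity)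
    (fun n => ?_) ((base_summable.mul_left ((L / π) ^ 2)))
  have hx := xsq_pos L hL n
  have h1 : (((n : ℝ) + 1) * π / L) ^ 2 ≤ (((n : ℝ) + 1) * π / L) ^ 2 + m ^ 2 :=
    le_add_of_nonneg_right (sq_nonneg m)
  have h2 : 1 / ((((n : ℝ) + 1) * π / L) ^ 2 + m ^ 2) ≤ 1 / (((n : ℝ) + 1) * π / L) ^ 2 :=
    one_div_le_one_div_of_le hx h1
  refine h2.trans (le_of_eq ?_)
  have hπ := Real.pi_ne_zero
  have hn : ((n:ℝ)+1) ≠ 0 := by positivity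
  field_simp

lemma log_summable (L m : ℝ) (hL : 0 < L) :
    Summable (fun n : ℕ => Real.log (1 + m ^ 2 / (((n : ℝ) + 1) * π / L) ^ 2)) := by
  refine Summable.of_nonneg_of_le (fun n => Real.log_nonneg (by
    have hx := xsq_pos L hL n
    have : (0:ℝ) ≤ m ^ 2 / (((n : ℝ) + 1) * π / L) ^ 2 := by positivity
    linarith))
    (fun n => ?_) (base_summable.mul_left ((L * m / π) ^ 2))
  have hx := xsq_pos L hL n
  have hpos : 0 < 1 + m ^ 2 / (((n : ℝ) + 1) * π / L) ^ 2 := by positivity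
  have := Real.log_le_sub_one_of_pos hpos
  calc Real.log (1 + m ^ 2 / (((n : ℝ) + 1) * π / L) ^ 2)
      ≤ m ^ 2 / (((n : ℝ) + 1) * π / L) ^ 2 := by linarith
    _ = (L * m / π) ^ 2 * (1 / ((n : ℝ) + 1) ^ 2) := by
        rw [msq_div_xsq L m hL n]; ring

lemma tsum_log_eq (L m : ℝ) (hL : 0 < L) (hm : 0 < m) :
    ∑' n : ℕ, Real.log (1 + m ^ 2 / (((n : ℝ) + 1) * π / L) ^ 2)
      = Real.log (Real.sinh (L * m) / (L * m)) := by
  set t : ℝ := L * m / π with ht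
  have htpos : 0 < t := by have := Real.pi_pos; positivity
  have hπt : π * t = L * m := by
    rw [ht]; field_simp
  -- the partial products tend to sinh(L m)/(L m)
  have hprod : Tendsto (fun N : ℕ => ∏ j ∈ Finset.range N, ((1 : ℝ) + t ^ 2 / ((j : ℝ) + 1) ^ 2))
      atTop (nhds (Real.sinh (L * m) / (L * m))) := by
    have h := (sinh_euler_prod t).mul_const (π * t)⁻¹
    have hne : (π * t) ≠ 0 := by positivity
    have heq : (fun N : ℕ => (π * t * ∏ j ∈ Finset.range N, ((1 : ℝ) + t ^ 2 / ((j : ℝ) + 1) ^ 2)) * (π * t)⁻¹)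
        = fun N : ℕ => ∏ j ∈ Finset.range N, ((1 : ℝ) + t ^ 2 / ((j : ℝ) + 1) ^ 2) := by
      funext N; rw [mul_comm]; exact inv_mul_cancel_left₀ hne _
    rw [heq, hπt] at h
    simpa [div_eq_mul_inv] using h
  have hlim_pos : 0 < Real.sinh (L * m) / (L * m) := by
    have : 0 < Real.sinh (L * m) := Real.sinh_pos_iff.mpr (by positivity)
    positivity
  have hlog : Tendsto (fun N : ℕ => Real.log (∏ j ∈ Finset.range N, ((1 : ℝ) + t ^ 2 / ((j : ℝ) + 1) ^ 2)))
      atTop (nhds (Real.log (Real.sinh (L * m) / (L * m)))) :=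
    ((Real.continuousAt_log hlim_pos.ne').tendsto).comp hprod
  have hterm : ∀ j : ℕ, (1 : ℝ) + m ^ 2 / (((j : ℝ) + 1) * π / L) ^ 2 = 1 + t ^ 2 / ((j : ℝ) + 1) ^ 2 := by
    intro j
    rw [msq_div_xsq L m hL j]
  have hlogsum : ∀ N : ℕ, Real.log (∏ j ∈ Finset.range N, ((1 : ℝ) + t ^ 2 / ((j : ℝ) + 1) ^ 2))
      = ∑ j ∈ Finset.range N, Real.log (1 + m ^ 2 / (((j : ℝ) + 1) * π / L) ^ 2) := by
    intro N
    rw [Real.log_prod]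
    · exact Finset.sum_congr rfl fun j _ => by rw [hterm j]
    · intro j _
      have : (0:ℝ) < 1 + t ^ 2 / ((j : ℝ) + 1) ^ 2 := by positivity
      exact this.ne'
  rw [funext hlogsum] at hlog
  have hsum := (log_summable L m hL).hasSum.tendsto_sum_nat
  exact tendsto_nhds_unique hsum hlog

lemma coth_tsum (L m : ℝ) (hL : 0 < L) (hm : 0 < m) :
    ∑' n : ℕ, 2 * m / ((((n : ℝ) + 1) * π / L) ^ 2 + m ^ 2)
      = Real.cosh (L * m) * L / Real.sinh (L * m) - 1 / m := by
  set g : ℕ → ℝ → ℝ := fun n y => Real.log (1 + y ^ 2 / (((n : ℝ) + 1) * π / L) ^ 2) with hg_def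
  set g' : ℕ → ℝ → ℝ := fun n y => 2 * y / ((((n : ℝ) + 1) * π / L) ^ 2 + y ^ 2) with hg'_def
  set u : ℕ → ℝ := fun n => 2 * (m + 1) * (L / π) ^ 2 * (1 / ((n : ℝ) + 1) ^ 2) with hu_def
  have hu : Summable u := base_summable.mul_left _
  have ht : IsOpen (Set.Ioo (0:ℝ) (m+1)) := isOpen_Ioo
  have h't : IsPreconnected (Set.Ioo (0:ℝ) (m+1)) := isPreconnected_Ioo
  have hmem : m ∈ Set.Ioo (0:ℝ) (m+1) := ⟨hm, by linarith⟩
  have hg : ∀ n : ℕ, ∀ y ∈ Set.Ioo (0:ℝ) (m+1), HasDerivAt (g n) (g' n y) y := by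
    intro n y hy
    have hx := xsq_pos L hL n
    rw [hg_def, hg'_def]
    simp only
    generalize hX : (((n : ℝ) + 1) * π / L) ^ 2 = X at hx ⊢
    have hinner : HasDerivAt (fun y : ℝ => 1 + y ^ 2 / X) (2 * y / X) y := by
      have := ((hasDerivAt_pow 2 y).div_const X).const_add 1
      refine this.congr_deriv ?_
      simp
    have hne : (1 + y ^ 2 / X) ≠ 0 := by positivity
    have := hinner.log hne
    convert this using 1
    field_simp
  have hg' : ∀ n : ℕ, ∀ y ∈ Set.Ioo (0:ℝ) (m+1), ‖g' n y‖ ≤ u n := by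
    intro n y hy
    have hx := xsq_pos L hL n
    obtain ⟨hy0, hy1⟩ := hy
    have hpos : 0 < (((n : ℝ) + 1) * π / L) ^ 2 + y ^ 2 := by positivity
    rw [hg'_def, Real.norm_eq_abs, abs_of_nonneg (by positivity)]
    have h1 : 2 * y / ((((n : ℝ) + 1) * π / L) ^ 2 + y ^ 2)
        ≤ 2 * (m + 1) / (((n : ℝ) + 1) * π / L) ^ 2 := by
      apply div_le_div₀ (by positivity) (by linarith) hx (le_add_of_nonneg_right (sq_nonneg y))
    refine h1.trans (le_of_eq ?_)
    rw [hu_def]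
    have hπ := Real.pi_ne_zero
    have hn : ((n:ℝ)+1) ≠ 0 := by positivity
    field_simp
  have hg0 : Summable (fun n => g n m) := log_summable L m hL
  have hderiv : HasDerivAt (fun z => ∑' n, g n z) (∑' n, g' n m) m :=
    hasDerivAt_tsum_of_isPreconnected hu ht h't hg hg' hmem hg0 hmem
  -- the closed form H
  have hsinh_pos : 0 < Real.sinh (L * m) := Real.sinh_pos_iff.mpr (by positivity)
  have hH : HasDerivAt (fun z => Real.log (Real.sinh (L * z) / (L * z)))
      (Real.cosh (L * m) * L / Real.sinh (L * m) - 1 / m) m := by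
    have h1 : HasDerivAt (fun z : ℝ => Real.sinh (L * z)) (Real.cosh (L * m) * L) m := by
      have := (Real.hasDerivAt_sinh (L * m)).comp m ((hasDerivAt_id m).const_mul L)
      simpa [mul_comm, Function.comp_def] using this
    have h2 : HasDerivAt (fun z : ℝ => L * z) L m := by
      simpa using (hasDerivAt_id m).const_mul L
    have hls : Real.sinh (L * m) ≠ 0 := hsinh_pos.ne'
    have hlm : (L * m) ≠ 0 := by positivity
    have := (h1.log hls).sub (h2.log hlm)
    have heq : (fun z : ℝ => Real.log (Real.sinh (L * z)) - Real.log (L * z))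
        =ᶠ[nhds m] (fun z => Real.log (Real.sinh (L * z) / (L * z))) := by
      filter_upwards [isOpen_Ioi.mem_nhds (show m ∈ Set.Ioi (0:ℝ) from hm)] with z hz
      rw [Real.log_div (Real.sinh_pos_iff.mpr (mul_pos hL hz)).ne' (mul_pos hL hz).ne']
    have := this.congr_of_eventuallyEq heq.symm
    refine this.congr_deriv ?_
    field_simp
  -- G agrees with H on Ioi 0
  have hGH : (fun z => ∑' n, g n z) =ᶠ[nhds m] (fun z => Real.log (Real.sinh (L * z) / (L * z))) := by
    filter_upwards [isOpen_Ioi.mem_nhds (show m ∈ Set.Ioi (0:ℝ) from hm)] with z hz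
    exact tsum_log_eq L z hL hz
  have hderiv2 : HasDerivAt (fun z => Real.log (Real.sinh (L * z) / (L * z))) (∑' n, g' n m) m :=
    hderiv.congr_of_eventuallyEq hGH.symm
  exact hderiv2.unique hH

lemma inv_tsum_eq (L m : ℝ) (hL : 0 < L) (hm : 0 < m) :
    ∑' n : ℕ, 1 / ((((n : ℝ) + 1) * π / L) ^ 2 + m ^ 2)
      = Real.cosh (L * m) * L / (2 * m * Real.sinh (L * m)) - 1 / (2 * m ^ 2) := by
  have h := coth_tsum L m hL hm
  set S : ℝ := ∑' n : ℕ, 1 / ((((n : ℝ) + 1) * π / L) ^ 2 + m ^ 2) with hSdef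
  have h2 : ∑' n : ℕ, 2 * m / ((((n : ℝ) + 1) * π / L) ^ 2 + m ^ 2) = 2 * m * S := by
    rw [hSdef, ← tsum_mul_left]
    congr 1; funext n; ring
  rw [h2] at h
  have hm2 : (2 * m) ≠ 0 := by positivity
  have hs : Real.sinh (L * m) ≠ 0 := (Real.sinh_pos_iff.mpr (by positivity)).ne'
  have hm' : m ≠ 0 := hm.ne'
  field_simp at h ⊢
  nlinarith [h, sq_nonneg m]

/-- Closed-form evaluation of the Dirichlet relative-entropy series in one dimension. -/
theorem dirichlet_relEntropy_closed_form (m₁ m₂ L : ℝ)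
    (h₁ : 0 < m₁) (h₂ : 0 < m₂) (hL : 0 < L) :
    ∑' n : ℕ,
        ((m₁ ^ 2 - m₂ ^ 2) / ((((n : ℝ) + 1) * π / L) ^ 2 + m₂ ^ 2)
          - Real.log (((((n : ℝ) + 1) * π / L) ^ 2 + m₁ ^ 2)
              / ((((n : ℝ) + 1) * π / L) ^ 2 + m₂ ^ 2)))
      = (1 / 2) * ((1 - m₁ ^ 2 / m₂ ^ 2)
          + L * (m₁ ^ 2 - m₂ ^ 2) / (m₂ * Real.tanh (L * m₂))
          - 2 * Real.log ((m₂ * Real.sinh (L * m₁)) / (m₁ * Real.sinh (L * m₂)))) := by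
  -- rewrite the summand
  have hterm : ∀ n : ℕ,
      ((m₁ ^ 2 - m₂ ^ 2) / ((((n : ℝ) + 1) * π / L) ^ 2 + m₂ ^ 2)
          - Real.log (((((n : ℝ) + 1) * π / L) ^ 2 + m₁ ^ 2)
              / ((((n : ℝ) + 1) * π / L) ^ 2 + m₂ ^ 2)))
      = (m₁ ^ 2 - m₂ ^ 2) * (1 / ((((n : ℝ) + 1) * π / L) ^ 2 + m₂ ^ 2))
          - (Real.log (1 + m₁ ^ 2 / (((n : ℝ) + 1) * π / L) ^ 2)
              - Real.log (1 + m₂ ^ 2 / (((n : ℝ) + 1) * π / L) ^ 2)) := by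
    intro n
    have hx := xsq_pos L hL n
    have e1 : (1 : ℝ) + m₁ ^ 2 / (((n : ℝ) + 1) * π / L) ^ 2
        = ((((n : ℝ) + 1) * π / L) ^ 2 + m₁ ^ 2) / (((n : ℝ) + 1) * π / L) ^ 2 := by
      field_simp
    have e2 : (1 : ℝ) + m₂ ^ 2 / (((n : ℝ) + 1) * π / L) ^ 2
        = ((((n : ℝ) + 1) * π / L) ^ 2 + m₂ ^ 2) / (((n : ℝ) + 1) * π / L) ^ 2 := by
      field_simp
    have p1 : (0:ℝ) < (((n : ℝ) + 1) * π / L) ^ 2 + m₁ ^ 2 := by positivity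
    have p2 : (0:ℝ) < (((n : ℝ) + 1) * π / L) ^ 2 + m₂ ^ 2 := by positivity
    rw [e1, e2, Real.log_div p1.ne' hx.ne', Real.log_div p2.ne' hx.ne',
      Real.log_div p1.ne' p2.ne']
    ring
  rw [tsum_congr hterm]
  have s1 := (inv_xsq_summable L m₂ hL).mul_left (m₁ ^ 2 - m₂ ^ 2)
  have s2 := log_summable L m₁ hL
  have s3 := log_summable L m₂ hL
  rw [Summable.tsum_sub s1 (s2.sub s3), Summable.tsum_sub s2 s3, tsum_mul_left,
    inv_tsum_eq L m₂ hL h₂, tsum_log_eq L m₁ hL h₁, tsum_log_eq L m₂ hL h₂]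
  -- now pure algebra
  have hs₁ : (0:ℝ) < Real.sinh (L * m₁) := Real.sinh_pos_iff.mpr (by positivity)
  have hs₂ : (0:ℝ) < Real.sinh (L * m₂) := Real.sinh_pos_iff.mpr (by positivity)
  have hc₂ : (0:ℝ) < Real.cosh (L * m₂) := Real.cosh_pos _
  have hlog : Real.log (Real.sinh (L * m₁) / (L * m₁)) - Real.log (Real.sinh (L * m₂) / (L * m₂))
      = Real.log ((m₂ * Real.sinh (L * m₁)) / (m₁ * Real.sinh (L * m₂))) := by
    rw [Real.log_div hs₁.ne' (by positivity : (L * m₁) ≠ 0),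
      Real.log_div hs₂.ne' (by positivity : (L * m₂) ≠ 0),
      Real.log_div (by positivity : (m₂ * Real.sinh (L * m₁)) ≠ 0)
        (by positivity : (m₁ * Real.sinh (L * m₂)) ≠ 0),
      Real.log_mul hL.ne' h₁.ne', Real.log_mul hL.ne' h₂.ne',
      Real.log_mul h₂.ne' hs₁.ne', Real.log_mul h₁.ne' hs₂.ne']
    ring
  rw [← hlog, Real.tanh_eq_sinh_div_cosh]
  field_simp
  ring
end

section
/- For m₁, m₂ > 0, the improper integral (1/2)∫_{ℝ} (dp/2π) [ (m₁² − m₂²)/(p² + m₂²) − log( (p² + m₁²)/(p² + m₂²) ) ] converges and equals (m₁ − m₂)²/(4 m₂). -/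
open Real MeasureTheory Filter


lemma aux_integrable_inv {c : ℝ} (hc : 0 < c) :
    Integrable (fun p : ℝ => (p ^ 2 + c ^ 2)⁻¹) := by
  have key : ∀ p : ℝ, (fun p : ℝ => (p ^ 2 + c ^ 2)⁻¹) p
      = c⁻¹ ^ 2 * (1 + (c⁻¹ * p) ^ 2)⁻¹ := by
    intro p
    have h : (0:ℝ) < p ^ 2 + c ^ 2 := by positivity
    field_simp
    ring
  simp_rw [key]
  exact ((integrable_inv_one_add_sq.comp_mul_left' (by positivity : (c⁻¹:ℝ) ≠ 0)).const_mul _)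

lemma aux_integral_inv {c : ℝ} (hc : 0 < c) :
    (∫ p : ℝ, (p ^ 2 + c ^ 2)⁻¹) = π / c := by
  have key : ∀ p : ℝ, (p ^ 2 + c ^ 2)⁻¹
      = c⁻¹ ^ 2 * (1 + (c⁻¹ * p) ^ 2)⁻¹ := by
    intro p
    have h : (0:ℝ) < p ^ 2 + c ^ 2 := by positivity
    field_simp
    ring
  simp_rw [key, integral_const_mul]
  rw [MeasureTheory.Measure.integral_comp_inv_mul_left (fun x : ℝ => (1 + x ^ 2)⁻¹) c,
    integral_univ_inv_one_add_sq, abs_of_pos hc, smul_eq_mul]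
  field_simp

lemma aux_abs_log_sub_log {x y : ℝ} (hx : 0 < x) (hy : 0 < y) :
    |Real.log x - Real.log y| ≤ |x - y| / min x y := by
  have hmin : 0 < min x y := lt_min hx hy
  have key : ∀ u v : ℝ, 0 < u → 0 < v →
      Real.log u - Real.log v ≤ |u - v| / min u v := by
    intro u v hu hv
    have h1 : Real.log (u / v) ≤ u / v - 1 :=
      Real.log_le_sub_one_of_pos (by positivity)
    rw [Real.log_div hu.ne' hv.ne'] at h1
    have h2 : u / v - 1 = (u - v) / v := by field_simp
    have h3 : (u - v) / v ≤ |u - v| / min u v := by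
      apply div_le_div₀ (by positivity) (le_abs_self _) (lt_min hu hv)
      exact min_le_right _ _
    linarith
  rw [abs_sub_le_iff]
  constructor
  · exact key x y hx hy
  · simpa [min_comm, abs_sub_comm] using key y x hy hx

lemma aux_log_bound {a b : ℝ} (ha : 0 < a) (hb : 0 < b) (p : ℝ) :
    |Real.log (p ^ 2 + a ^ 2) - Real.log (p ^ 2 + b ^ 2)|
      ≤ |a ^ 2 - b ^ 2| / (p ^ 2 + min a b ^ 2) := by
  have h1 : (0:ℝ) < p ^ 2 + a ^ 2 := by positivity
  have h2 : (0:ℝ) < p ^ 2 + b ^ 2 := by positivity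
  have h := aux_abs_log_sub_log h1 h2
  have hm : p ^ 2 + min a b ^ 2 ≤ min (p ^ 2 + a ^ 2) (p ^ 2 + b ^ 2) := by
    rcases le_total a b with h | h
    · rw [min_eq_left h, le_min_iff]
      constructor <;> nlinarith
    · rw [min_eq_right h, le_min_iff]
      constructor <;> nlinarith
  have hms : (0:ℝ) < p ^ 2 + min a b ^ 2 := by
    have : 0 < min a b := lt_min ha hb
    positivity
  calc |Real.log (p ^ 2 + a ^ 2) - Real.log (p ^ 2 + b ^ 2)|
      ≤ |p ^ 2 + a ^ 2 - (p ^ 2 + b ^ 2)| / min (p ^ 2 + a ^ 2) (p ^ 2 + b ^ 2) := h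
    _ ≤ |a ^ 2 - b ^ 2| / (p ^ 2 + min a b ^ 2) := by
        apply div_le_div₀ (abs_nonneg _) (le_of_eq (by ring_nf)) hms hm

lemma aux_integrable_logdiff {a b : ℝ} (ha : 0 < a) (hb : 0 < b) :
    Integrable (fun p : ℝ => Real.log (p ^ 2 + a ^ 2) - Real.log (p ^ 2 + b ^ 2)) := by
  have hmin : 0 < min a b := lt_min ha hb
  have hcont : Continuous (fun p : ℝ => Real.log (p ^ 2 + a ^ 2) - Real.log (p ^ 2 + b ^ 2)) := by
    apply Continuous.sub <;>
    · apply Continuous.log (by continuity)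
      intro x; positivity
  apply Integrable.mono' ((aux_integrable_inv hmin).const_mul |a ^ 2 - b ^ 2|)
    hcont.aestronglyMeasurable
  filter_upwards with p
  rw [Real.norm_eq_abs]
  simpa [div_eq_mul_inv] using aux_log_bound ha hb p
lemma aux_tendsto_xlog {a b : ℝ} (ha : 0 < a) (hb : 0 < b) {l : Filter ℝ}
    (hl : Filter.Tendsto (fun p : ℝ => |p|) l Filter.atTop) :
    Filter.Tendsto (fun p : ℝ => p * (Real.log (p ^ 2 + a ^ 2) - Real.log (p ^ 2 + b ^ 2)))
      l (nhds 0) := by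
  have hc : 0 < min a b := lt_min ha hb
  apply squeeze_zero_norm' (a := fun p : ℝ => |a ^ 2 - b ^ 2| / |p|)
  · filter_upwards [hl.eventually_ge_atTop 1] with p hp
    have hp0 : (0:ℝ) < |p| := lt_of_lt_of_le one_pos hp
    have hbd := aux_log_bound ha hb p
    have hpos : (0:ℝ) < p ^ 2 + min a b ^ 2 := by positivity
    rw [norm_mul, Real.norm_eq_abs, Real.norm_eq_abs]
    calc |p| * |Real.log (p ^ 2 + a ^ 2) - Real.log (p ^ 2 + b ^ 2)|
        ≤ |p| * (|a ^ 2 - b ^ 2| / (p ^ 2 + min a b ^ 2)) :=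
          mul_le_mul_of_nonneg_left hbd hp0.le
      _ ≤ |a ^ 2 - b ^ 2| / |p| := by
          rw [mul_div_assoc', div_le_div_iff₀ hpos hp0]
          nlinarith [abs_nonneg (a ^ 2 - b ^ 2), sq_abs p, sq_nonneg (min a b)]
  · exact tendsto_const_nhds.div_atTop hl

lemma aux_hasDeriv {a b : ℝ} (ha : 0 < a) (hb : 0 < b) (p : ℝ) :
    HasDerivAt (fun p : ℝ => p * (Real.log (p ^ 2 + a ^ 2) - Real.log (p ^ 2 + b ^ 2))
        + 2 * a * Real.arctan (p / a) - 2 * b * Real.arctan (p / b))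
      (Real.log (p ^ 2 + a ^ 2) - Real.log (p ^ 2 + b ^ 2)) p := by
  have hpa : (0:ℝ) < p ^ 2 + a ^ 2 := by positivity
  have hpb : (0:ℝ) < p ^ 2 + b ^ 2 := by positivity
  have hsqa : HasDerivAt (fun p : ℝ => p ^ 2 + a ^ 2) (2 * p) p := by
    simpa using (hasDerivAt_pow 2 p).add_const (a ^ 2)
  have hsqb : HasDerivAt (fun p : ℝ => p ^ 2 + b ^ 2) (2 * p) p := by
    simpa using (hasDerivAt_pow 2 p).add_const (b ^ 2)
  have hloga := hsqa.log hpa.ne'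
  have hlogb := hsqb.log hpb.ne'
  have hmul := (hasDerivAt_id p).mul (hloga.sub hlogb)
  have hata : HasDerivAt (fun p : ℝ => Real.arctan (p / a))
      ((1 / (1 + (p / a) ^ 2)) * (1 / a)) p := by
    have := (Real.hasDerivAt_arctan (p / a)).comp p ((hasDerivAt_id p).div_const a)
    simpa [Function.comp_def] using this
  have hatb : HasDerivAt (fun p : ℝ => Real.arctan (p / b))
      ((1 / (1 + (p / b) ^ 2)) * (1 / b)) p := by
    have := (Real.hasDerivAt_arctan (p / b)).comp p ((hasDerivAt_id p).div_const b)
    simpa [Function.comp_def] using this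
  have h := (hmul.add (hata.const_mul (2 * a))).sub (hatb.const_mul (2 * b))
  refine h.congr_deriv ?_
  simp only [Pi.sub_apply, id]
  have h1 : 1 + (p / a) ^ 2 = (p ^ 2 + a ^ 2) / a ^ 2 := by field_simp; ring
  have h2 : 1 + (p / b) ^ 2 = (p ^ 2 + b ^ 2) / b ^ 2 := by field_simp; ring
  rw [h1, h2]
  field_simp
  ring

lemma aux_integral_logdiff {a b : ℝ} (ha : 0 < a) (hb : 0 < b) :
    (∫ p : ℝ, (Real.log (p ^ 2 + a ^ 2) - Real.log (p ^ 2 + b ^ 2)))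
      = 2 * π * (a - b) := by
  have hint := aux_integrable_logdiff ha hb
  have hat : ∀ c : ℝ, 0 < c → Filter.Tendsto (fun p : ℝ => Real.arctan (p / c))
      Filter.atTop (nhds (π / 2)) := fun c hc =>
    (tendsto_nhds_of_tendsto_nhdsWithin Real.tendsto_arctan_atTop).comp
      (Filter.tendsto_id.atTop_div_const hc)
  have hab : ∀ c : ℝ, 0 < c → Filter.Tendsto (fun p : ℝ => Real.arctan (p / c))
      Filter.atBot (nhds (-(π / 2))) := fun c hc =>
    (tendsto_nhds_of_tendsto_nhdsWithin Real.tendsto_arctan_atBot).comp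
      (Filter.tendsto_id.atBot_div_const hc)
  have htop : Filter.Tendsto (fun p : ℝ =>
      p * (Real.log (p ^ 2 + a ^ 2) - Real.log (p ^ 2 + b ^ 2))
        + 2 * a * Real.arctan (p / a) - 2 * b * Real.arctan (p / b))
      Filter.atTop (nhds (π * (a - b))) := by
    have := ((aux_tendsto_xlog ha hb tendsto_abs_atTop_atTop).add
      (((hat a ha).const_mul (2 * a)))).sub ((hat b hb).const_mul (2 * b))
    convert this using 2
    ring
  have hbot : Filter.Tendsto (fun p : ℝ =>
      p * (Real.log (p ^ 2 + a ^ 2) - Real.log (p ^ 2 + b ^ 2))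
        + 2 * a * Real.arctan (p / a) - 2 * b * Real.arctan (p / b))
      Filter.atBot (nhds (-(π * (a - b)))) := by
    have := ((aux_tendsto_xlog ha hb tendsto_abs_atBot_atTop).add
      (((hab a ha).const_mul (2 * a)))).sub ((hab b hb).const_mul (2 * b))
    convert this using 2
    ring
  have := MeasureTheory.integral_of_hasDerivAt_of_tendsto
    (fun p => aux_hasDeriv ha hb p) hint hbot htop
  rw [this]
  ring
/-- The infinite-volume relative entropy density in one dimension:
the integrand is integrable over `ℝ` and the integral equals `(m₁ - m₂)²/(4 m₂)`. -/
theorem relEntropy_density_one_dim (m₁ m₂ : ℝ) (h₁ : 0 < m₁) (h₂ : 0 < m₂) :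
    Integrable (fun p : ℝ =>
        (m₁ ^ 2 - m₂ ^ 2) / (p ^ 2 + m₂ ^ 2)
          - Real.log ((p ^ 2 + m₁ ^ 2) / (p ^ 2 + m₂ ^ 2))) ∧
      (1 / 2) * ∫ p : ℝ, (1 / (2 * π)) *
          ((m₁ ^ 2 - m₂ ^ 2) / (p ^ 2 + m₂ ^ 2)
            - Real.log ((p ^ 2 + m₁ ^ 2) / (p ^ 2 + m₂ ^ 2)))
        = (m₁ - m₂) ^ 2 / (4 * m₂) := by
  have hlogeq : ∀ p : ℝ, Real.log ((p ^ 2 + m₁ ^ 2) / (p ^ 2 + m₂ ^ 2))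
      = Real.log (p ^ 2 + m₁ ^ 2) - Real.log (p ^ 2 + m₂ ^ 2) := fun p =>
    Real.log_div (by positivity) (by positivity)
  have hint1 : Integrable (fun p : ℝ => (m₁ ^ 2 - m₂ ^ 2) / (p ^ 2 + m₂ ^ 2)) := by
    simp_rw [div_eq_mul_inv]
    exact (aux_integrable_inv h₂).const_mul _
  have hint2 := aux_integrable_logdiff h₁ h₂
  have hint : Integrable (fun p : ℝ =>
      (m₁ ^ 2 - m₂ ^ 2) / (p ^ 2 + m₂ ^ 2)
        - Real.log ((p ^ 2 + m₁ ^ 2) / (p ^ 2 + m₂ ^ 2))) := by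
    simp_rw [hlogeq]
    exact hint1.sub hint2
  refine ⟨hint, ?_⟩
  rw [MeasureTheory.integral_const_mul]
  have hval : (∫ p : ℝ, ((m₁ ^ 2 - m₂ ^ 2) / (p ^ 2 + m₂ ^ 2)
      - Real.log ((p ^ 2 + m₁ ^ 2) / (p ^ 2 + m₂ ^ 2))))
      = (m₁ ^ 2 - m₂ ^ 2) * (π / m₂) - 2 * π * (m₁ - m₂) := by
    simp_rw [hlogeq]
    rw [MeasureTheory.integral_sub hint1 hint2, aux_integral_logdiff h₁ h₂]
    congr 1
    simp_rw [div_eq_mul_inv]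
    rw [MeasureTheory.integral_const_mul, aux_integral_inv h₂, div_eq_mul_inv]
  rw [hval]
  field_simp
  ring
end

section
/- For m₁, m₂ > 0 and d = 3, the improper integral (1/2)∫_{ℝ³} (d³p/(2π)³) [ (m₁² − m₂²)/(|p|² + m₂²) − log( (|p|² + m₁²)/(|p|² + m₂²) ) ] converges and equals (2m₁ + m₂)(m₁ − m₂)²/(24π). -/
open Real MeasureTheory Filter Topology Set Metric

namespace RelEntropyAux


lemma integrand_nonneg {a b : ℝ} (ha : 0 < a) (hb : 0 < b) (r : ℝ) :
    0 ≤ (a ^ 2 - b ^ 2) / (r ^ 2 + b ^ 2) - Real.log ((r ^ 2 + a ^ 2) / (r ^ 2 + b ^ 2)) := by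
  have h1 : (0:ℝ) < r ^ 2 + a ^ 2 := by positivity
  have h2 : (0:ℝ) < r ^ 2 + b ^ 2 := by positivity
  have h := Real.log_le_sub_one_of_pos (div_pos h1 h2)
  have e : (r ^ 2 + a ^ 2) / (r ^ 2 + b ^ 2) - 1 = (a ^ 2 - b ^ 2) / (r ^ 2 + b ^ 2) := by
    field_simp
    ring
  linarith [e ▸ h]

lemma integrand_le {a b : ℝ} (ha : 0 < a) (hb : 0 < b) (r : ℝ) :
    (a ^ 2 - b ^ 2) / (r ^ 2 + b ^ 2) - Real.log ((r ^ 2 + a ^ 2) / (r ^ 2 + b ^ 2))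
      ≤ (a ^ 2 - b ^ 2) ^ 2 / ((r ^ 2 + a ^ 2) * (r ^ 2 + b ^ 2)) := by
  have h1 : (0:ℝ) < r ^ 2 + a ^ 2 := by positivity
  have h2 : (0:ℝ) < r ^ 2 + b ^ 2 := by positivity
  have h := Real.log_le_sub_one_of_pos (div_pos h2 h1)
  have hlog : Real.log ((r ^ 2 + a ^ 2) / (r ^ 2 + b ^ 2))
      = - Real.log ((r ^ 2 + b ^ 2) / (r ^ 2 + a ^ 2)) := by
    rw [← Real.log_inv, inv_div]
  rw [hlog]
  have e : (r ^ 2 + b ^ 2) / (r ^ 2 + a ^ 2) - 1 = -((a ^ 2 - b ^ 2) / (r ^ 2 + a ^ 2)) := by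
    field_simp
    ring
  have e2 : (a ^ 2 - b ^ 2) / (r ^ 2 + b ^ 2) - (a ^ 2 - b ^ 2) / (r ^ 2 + a ^ 2)
      = (a ^ 2 - b ^ 2) ^ 2 / ((r ^ 2 + a ^ 2) * (r ^ 2 + b ^ 2)) := by
    field_simp
    ring
  linarith [e ▸ h]




lemma log_one_add_ge {x : ℝ} (hx : 0 ≤ x) : x - x ^ 2 ≤ Real.log (1 + x) := by
  have h1 : (0:ℝ) < 1 + x := by linarith
  have h := Real.log_le_sub_one_of_pos (inv_pos.mpr h1)
  rw [Real.log_inv] at h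
  have e : (1:ℝ) - (1 + x)⁻¹ = x / (1 + x) := by field_simp; ring
  have h2 : x / (1 + x) ≤ Real.log (1 + x) := by linarith
  have h3 : x - x ^ 2 ≤ x / (1 + x) := by
    rw [le_div_iff₀ h1]; nlinarith
  linarith

lemma key_tendsto {m : ℝ} (hm : 0 < m) :
    Tendsto (fun r : ℝ => m ^ 2 * r - r ^ 3 * Real.log ((r ^ 2 + m ^ 2) / r ^ 2))
      atTop (𝓝 0) := by
  have hg : Tendsto (fun r : ℝ => m ^ 4 / r) atTop (𝓝 0) :=
    tendsto_const_nhds.div_atTop tendsto_id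
  refine squeeze_zero' ?_ ?_ hg
  · filter_upwards [eventually_gt_atTop (0:ℝ)] with r hr
    have hr2 : (0:ℝ) < r ^ 2 := by positivity
    have e : (r ^ 2 + m ^ 2) / r ^ 2 = 1 + m ^ 2 / r ^ 2 := by field_simp
    rw [e]
    have hx : (0:ℝ) ≤ m ^ 2 / r ^ 2 := by positivity
    have h := Real.log_le_sub_one_of_pos (show (0:ℝ) < 1 + m ^ 2 / r ^ 2 by linarith)
    have hb : Real.log (1 + m ^ 2 / r ^ 2) ≤ m ^ 2 / r ^ 2 := by linarith
    have h3 : r ^ 3 * Real.log (1 + m ^ 2 / r ^ 2) ≤ r ^ 3 * (m ^ 2 / r ^ 2) :=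
      mul_le_mul_of_nonneg_left hb (by positivity)
    have e2 : r ^ 3 * (m ^ 2 / r ^ 2) = m ^ 2 * r := by field_simp
    linarith [e2 ▸ h3]
  · filter_upwards [eventually_gt_atTop (0:ℝ)] with r hr
    have hr2 : (0:ℝ) < r ^ 2 := by positivity
    have e : (r ^ 2 + m ^ 2) / r ^ 2 = 1 + m ^ 2 / r ^ 2 := by field_simp
    rw [e]
    have hx : (0:ℝ) ≤ m ^ 2 / r ^ 2 := by positivity
    have h := log_one_add_ge hx
    have h3 : r ^ 3 * (m ^ 2 / r ^ 2 - (m ^ 2 / r ^ 2) ^ 2)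
        ≤ r ^ 3 * Real.log (1 + m ^ 2 / r ^ 2) :=
      mul_le_mul_of_nonneg_left h (by positivity)
    have e2 : r ^ 3 * (m ^ 2 / r ^ 2 - (m ^ 2 / r ^ 2) ^ 2) = m ^ 2 * r - m ^ 4 / r := by
      field_simp
    linarith [e2 ▸ h3]



noncomputable def F (a b : ℝ) : ℝ → ℝ := fun r =>
  (a ^ 2 - b ^ 2) / 3 * r - r ^ 3 / 3 * (Real.log (r ^ 2 + a ^ 2) - Real.log (r ^ 2 + b ^ 2))
    + 2 / 3 * a ^ 3 * Real.arctan (r / a) - 2 / 3 * b ^ 3 * Real.arctan (r / b)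
    - (a ^ 2 - b ^ 2) * b * Real.arctan (r / b)

lemma hasDerivAt_F {a b : ℝ} (ha : 0 < a) (hb : 0 < b) (x : ℝ) :
    HasDerivAt (F a b)
      (x ^ 2 * ((a ^ 2 - b ^ 2) / (x ^ 2 + b ^ 2)
        - Real.log ((x ^ 2 + a ^ 2) / (x ^ 2 + b ^ 2)))) x := by
  have h1 : (0:ℝ) < x ^ 2 + a ^ 2 := by positivity
  have h2 : (0:ℝ) < x ^ 2 + b ^ 2 := by positivity
  have hsqa : HasDerivAt (fun r : ℝ => r ^ 2 + a ^ 2) (2 * x) x := by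
    simpa using (hasDerivAt_pow 2 x).add_const (a ^ 2)
  have hsqb : HasDerivAt (fun r : ℝ => r ^ 2 + b ^ 2) (2 * x) x := by
    simpa using (hasDerivAt_pow 2 x).add_const (b ^ 2)
  have hla : HasDerivAt (fun r : ℝ => Real.log (r ^ 2 + a ^ 2)) (2 * x / (x ^ 2 + a ^ 2)) x :=
    hsqa.log h1.ne'
  have hlb : HasDerivAt (fun r : ℝ => Real.log (r ^ 2 + b ^ 2)) (2 * x / (x ^ 2 + b ^ 2)) x :=
    hsqb.log h2.ne'
  have hcube : HasDerivAt (fun r : ℝ => r ^ 3 / 3) (x ^ 2) x := by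
    have := (hasDerivAt_pow 3 x).div_const 3
    exact this.congr_deriv (by push_cast; ring)
  have hA : HasDerivAt (fun r : ℝ => (a ^ 2 - b ^ 2) / 3 * r) ((a ^ 2 - b ^ 2) / 3) x := by
    simpa using (hasDerivAt_id x).const_mul ((a ^ 2 - b ^ 2) / 3)
  have hB : HasDerivAt
      (fun r : ℝ => r ^ 3 / 3 * (Real.log (r ^ 2 + a ^ 2) - Real.log (r ^ 2 + b ^ 2)))
      (x ^ 2 * (Real.log (x ^ 2 + a ^ 2) - Real.log (x ^ 2 + b ^ 2))
        + x ^ 3 / 3 * (2 * x / (x ^ 2 + a ^ 2) - 2 * x / (x ^ 2 + b ^ 2))) x :=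
    hcube.mul (hla.sub hlb)
  have hata : HasDerivAt (fun r : ℝ => Real.arctan (r / a))
      (1 / (1 + (x / a) ^ 2) * (1 / a)) x := by
    have h := (Real.hasDerivAt_arctan (x / a)).comp x ((hasDerivAt_id x).div_const a)
    simpa [Function.comp_def] using h
  have hatb : HasDerivAt (fun r : ℝ => Real.arctan (r / b))
      (1 / (1 + (x / b) ^ 2) * (1 / b)) x := by
    have h := (Real.hasDerivAt_arctan (x / b)).comp x ((hasDerivAt_id x).div_const b)
    simpa [Function.comp_def] using h
  have hF := (((hA.sub hB).add (hata.const_mul (2 / 3 * a ^ 3))).sub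
      (hatb.const_mul (2 / 3 * b ^ 3))).sub (hatb.const_mul ((a ^ 2 - b ^ 2) * b))
  refine HasDerivAt.congr_deriv (f := F a b) hF ?_
  rw [Real.log_div h1.ne' h2.ne']
  field_simp
  ring

lemma tendsto_F {a b : ℝ} (ha : 0 < a) (hb : 0 < b) :
    Tendsto (F a b) atTop (𝓝 ((2 * a + b) * (a - b) ^ 2 * π / 6)) := by
  have harc : ∀ m : ℝ, 0 < m →
      Tendsto (fun r : ℝ => Real.arctan (r / m)) atTop (𝓝 (π / 2)) := by
    intro m hm
    exact (Real.tendsto_arctan_atTop.mono_right nhdsWithin_le_nhds).comp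
      (Tendsto.atTop_div_const hm tendsto_id)
  have hz : Tendsto (fun r : ℝ => (a ^ 2 - b ^ 2) / 3 * r
      - r ^ 3 / 3 * (Real.log (r ^ 2 + a ^ 2) - Real.log (r ^ 2 + b ^ 2))) atTop (𝓝 0) := by
    have h := ((key_tendsto ha).sub (key_tendsto hb)).div_const 3
    rw [show ((0:ℝ) - 0) / 3 = 0 by norm_num] at h
    refine h.congr' ?_
    filter_upwards [eventually_gt_atTop (0:ℝ)] with r hr
    have hr2 : (r:ℝ) ^ 2 ≠ 0 := by positivity
    rw [Real.log_div (by positivity) hr2, Real.log_div (by positivity) hr2]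
    ring
  have h := ((hz.add ((harc a ha).const_mul (2 / 3 * a ^ 3))).sub
      ((harc b hb).const_mul (2 / 3 * b ^ 3))).sub
      ((harc b hb).const_mul ((a ^ 2 - b ^ 2) * b))
  have e : (0:ℝ) + 2 / 3 * a ^ 3 * (π / 2) - 2 / 3 * b ^ 3 * (π / 2)
      - (a ^ 2 - b ^ 2) * b * (π / 2) = (2 * a + b) * (a - b) ^ 2 * π / 6 := by ring
  rw [e] at h
  exact h



lemma bound_aux {a b : ℝ} (ha : 0 < a) (hb : 0 < b) (r : ℝ) (hr : 0 ≤ r) :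
    (a ^ 2 - b ^ 2) ^ 2 / ((r ^ 2 + a ^ 2) * (r ^ 2 + b ^ 2))
      ≤ 4 * (a ^ 2 - b ^ 2) ^ 2 / (min 1 (a ^ 2) * min 1 (b ^ 2)) * ((1 + r) ^ 4)⁻¹ := by
  set c1 := min 1 (a ^ 2) with hc1def
  set c2 := min 1 (b ^ 2) with hc2def
  have hc1 : 0 < c1 := lt_min one_pos (by positivity)
  have hc2 : 0 < c2 := lt_min one_pos (by positivity)
  have e1 : c1 / 2 * (1 + r) ^ 2 ≤ r ^ 2 + a ^ 2 := by
    have h1 : c1 ≤ 1 := min_le_left _ _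
    have h2 : c1 ≤ a ^ 2 := min_le_right _ _
    nlinarith [sq_nonneg (1 - r), sq_nonneg r]
  have e2 : c2 / 2 * (1 + r) ^ 2 ≤ r ^ 2 + b ^ 2 := by
    have h1 : c2 ≤ 1 := min_le_left _ _
    have h2 : c2 ≤ b ^ 2 := min_le_right _ _
    nlinarith [sq_nonneg (1 - r), sq_nonneg r]
  have e3 := mul_le_mul e1 e2 (by positivity) (by positivity)
  have h1r : (0:ℝ) < 1 + r := by linarith
  rw [← div_eq_mul_inv, div_div, div_le_div_iff₀ (by positivity) (by positivity)]
  nlinarith [mul_le_mul_of_nonneg_left e3 (by positivity : (0:ℝ) ≤ 4 * (a ^ 2 - b ^ 2) ^ 2)]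


lemma oneDim {a b : ℝ} (ha : 0 < a) (hb : 0 < b) :
    ∫ r in Ioi (0:ℝ), r ^ 2 * ((a ^ 2 - b ^ 2) / (r ^ 2 + b ^ 2)
        - Real.log ((r ^ 2 + a ^ 2) / (r ^ 2 + b ^ 2)))
      = (2 * a + b) * (a - b) ^ 2 * π / 6 := by
  have h := integral_Ioi_of_hasDerivAt_of_nonneg' (a := (0:ℝ)) (g := F a b)
    (fun x _ => hasDerivAt_F ha hb x)
    (fun x _ => mul_nonneg (sq_nonneg x) (integrand_nonneg ha hb x))
    (tendsto_F ha hb)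
  have hF0 : F a b 0 = 0 := by
    simp [F, Real.arctan_zero]
  rw [h, hF0, sub_zero]

lemma ball_vol : (volume (Metric.ball (0 : EuclideanSpace ℝ (Fin 3)) 1)).toReal
    = 4 * π / 3 := by
  rw [EuclideanSpace.volume_ball]
  simp only [Fintype.card_fin]
  have h32 : Real.Gamma (3 / 2) = Real.sqrt π / 2 := by
    rw [show (3:ℝ)/2 = 1/2 + 1 by norm_num, Real.Gamma_add_one (by norm_num),
      Real.Gamma_one_half_eq]
    ring
  have hG : Real.Gamma ((3:ℕ) / 2 + 1 : ℝ) = 3 / 4 * Real.sqrt π := by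
    push_cast
    rw [show (3:ℝ)/2 + 1 = 3/2 + 1 by norm_num, Real.Gamma_add_one (by norm_num), h32]
    ring
  rw [hG]
  have hs : Real.sqrt π ^ 3 = π * Real.sqrt π := by
    rw [pow_succ, Real.sq_sqrt pi_pos.le]
  have hne : Real.sqrt π ≠ 0 := ne_of_gt (Real.sqrt_pos.mpr pi_pos)
  have he : Real.sqrt π ^ 3 / (3 / 4 * Real.sqrt π) = 4 * π / 3 := by
    rw [hs]; field_simp
  rw [he]
  simp [ENNReal.toReal_ofReal (by positivity : (0:ℝ) ≤ 4 * π / 3)]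

end RelEntropyAux

open RelEntropyAux

/-- The infinite-volume relative entropy density in three dimensions equals
`(2m₁ + m₂)(m₁ - m₂)²/(24π)`. -/
theorem relEntropy_density_three_dim (m₁ m₂ : ℝ) (h₁ : 0 < m₁) (h₂ : 0 < m₂) :
    Integrable (fun p : EuclideanSpace ℝ (Fin 3) =>
        (m₁ ^ 2 - m₂ ^ 2) / (‖p‖ ^ 2 + m₂ ^ 2)
          - Real.log ((‖p‖ ^ 2 + m₁ ^ 2) / (‖p‖ ^ 2 + m₂ ^ 2))) ∧
      (1 / 2) * ∫ p : EuclideanSpace ℝ (Fin 3), (1 / (2 * π) ^ 3) *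
          ((m₁ ^ 2 - m₂ ^ 2) / (‖p‖ ^ 2 + m₂ ^ 2)
            - Real.log ((‖p‖ ^ 2 + m₁ ^ 2) / (‖p‖ ^ 2 + m₂ ^ 2)))
        = (2 * m₁ + m₂) * (m₁ - m₂) ^ 2 / (24 * π) := by
  constructor
  · have hn : Continuous fun p : EuclideanSpace ℝ (Fin 3) => ‖p‖ ^ 2 := continuous_norm.pow 2
    have c2 : Continuous fun p : EuclideanSpace ℝ (Fin 3) => ‖p‖ ^ 2 + m₂ ^ 2 :=
      hn.add continuous_const
    have c1 : Continuous fun p : EuclideanSpace ℝ (Fin 3) => ‖p‖ ^ 2 + m₁ ^ 2 :=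
      hn.add continuous_const
    have hcont : Continuous (fun p : EuclideanSpace ℝ (Fin 3) =>
        (m₁ ^ 2 - m₂ ^ 2) / (‖p‖ ^ 2 + m₂ ^ 2)
          - Real.log ((‖p‖ ^ 2 + m₁ ^ 2) / (‖p‖ ^ 2 + m₂ ^ 2))) := by
      refine (continuous_const.div c2 fun p => by positivity).sub
        ((c1.div c2 fun p => by positivity).log fun p =>
          ne_of_gt (div_pos (by positivity) (by positivity)))
    have hK : Integrable (fun p : EuclideanSpace ℝ (Fin 3) =>
        4 * (m₁ ^ 2 - m₂ ^ 2) ^ 2 / (min 1 (m₁ ^ 2) * min 1 (m₂ ^ 2))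
          * (1 + ‖p‖) ^ (-(4:ℝ))) := by
      refine (integrable_one_add_norm ?_).const_mul _
      simp [finrank_euclideanSpace]
      norm_num
    refine hK.mono' hcont.aestronglyMeasurable (ae_of_all _ fun p => ?_)
    rw [Real.norm_eq_abs, abs_of_nonneg (integrand_nonneg h₁ h₂ ‖p‖)]
    have hrp : (1 + ‖p‖ : ℝ) ^ (-(4:ℝ)) = ((1 + ‖p‖) ^ (4:ℕ))⁻¹ := by
      rw [← Real.rpow_natCast (1 + ‖p‖) 4, ← Real.rpow_neg (by positivity)]
      norm_num
    rw [hrp]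
    exact le_trans (integrand_le h₁ h₂ ‖p‖) (bound_aux h₁ h₂ ‖p‖ (norm_nonneg p))
  · have hval := integral_fun_norm_addHaar (volume : Measure (EuclideanSpace ℝ (Fin 3)))
      (fun y : ℝ => (1 / (2 * π) ^ 3) *
          ((m₁ ^ 2 - m₂ ^ 2) / (y ^ 2 + m₂ ^ 2)
            - Real.log ((y ^ 2 + m₁ ^ 2) / (y ^ 2 + m₂ ^ 2))))
    beta_reduce at hval
    rw [hval]
    have hfinrank : Module.finrank ℝ (EuclideanSpace ℝ (Fin 3)) = 3 := by
      simp [finrank_euclideanSpace]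
    simp only [hfinrank, measureReal_def, ball_vol, nsmul_eq_mul, smul_eq_mul, Nat.cast_ofNat]
    have hinner : ∫ y in Ioi (0:ℝ), y ^ (3 - 1) * ((1 / (2 * π) ^ 3) *
          ((m₁ ^ 2 - m₂ ^ 2) / (y ^ 2 + m₂ ^ 2)
            - Real.log ((y ^ 2 + m₁ ^ 2) / (y ^ 2 + m₂ ^ 2))))
        = (1 / (2 * π) ^ 3) * ((2 * m₁ + m₂) * (m₁ - m₂) ^ 2 * π / 6) := by
      rw [← oneDim h₁ h₂, ← integral_const_mul]
      congr 1
      funext y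
      ring
    rw [hinner]
    field_simp
    ring
end

section
/- For m₁, m₂ > 0 and d = 2, the improper integral (1/2)∫_{ℝ²} (d²p/(2π)²) [ (m₁² − m₂²)/(|p|² + m₂²) − log( (|p|² + m₁²)/(|p|² + m₂²) ) ] converges and equals (1/(8π))( m₂² − m₁² + m₁² log(m₁²/m₂²) ). -/
open Real MeasureTheory
open Module Set Filter Topology

lemma key_ineq (a b : ℝ) (ha : 0 < a) (hb : 0 < b) (r : ℝ) :
    |(a - b) / (r ^ 2 + b) - Real.log ((r ^ 2 + a) / (r ^ 2 + b))|
      ≤ (a - b) ^ 2 / ((r ^ 2 + b) * (r ^ 2 + a)) := by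
  have hub : 0 < r ^ 2 + b := by positivity
  have hua : 0 < r ^ 2 + a := by positivity
  set y : ℝ := (r ^ 2 + a) / (r ^ 2 + b) with hy
  have hy0 : 0 < y := by positivity
  have hx : (a - b) / (r ^ 2 + b) = y - 1 := by rw [hy]; field_simp; ring
  have hup : Real.log y ≤ y - 1 := Real.log_le_sub_one_of_pos hy0
  have hlow : 1 - 1/y ≤ Real.log y := by
    have := Real.log_le_sub_one_of_pos (show (0:ℝ) < 1/y by positivity)
    rw [Real.log_div one_ne_zero hy0.ne', Real.log_one] at this
    linarith
  rw [hx, abs_le]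
  constructor
  · have h1 : (a-b)^2 / ((r^2+b)*(r^2+a)) ≥ 0 := by positivity
    linarith
  · have h2 : y - 1 - Real.log y ≤ (y-1)^2 / y := by
      have : (y-1) - (1 - 1/y) = (y-1)^2/y := by field_simp
      linarith
    have h3 : (y-1)^2 / y = (a - b) ^ 2 / ((r ^ 2 + b) * (r ^ 2 + a)) := by
      rw [hy]; field_simp; ring
    linarith

lemma growth (a b : ℝ) (ha : 0 < a) (hb : 0 < b) (n : ℝ) (hn : 0 ≤ n) :
    (1 + n) ^ 4 ≤ 4 * max 1 (1/a) * max 1 (1/b) * ((n ^ 2 + a) * (n ^ 2 + b)) := by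
  have hMa1 : (1:ℝ) ≤ max 1 (1/a) := le_max_left _ _
  have hMb1 : (1:ℝ) ≤ max 1 (1/b) := le_max_left _ _
  have hMaa : 1 ≤ max 1 (1/a) * a := by
    calc (1:ℝ) = (1/a) * a := by field_simp
    _ ≤ max 1 (1/a) * a := by gcongr; exact le_max_right _ _
  have hMbb : 1 ≤ max 1 (1/b) * b := by
    calc (1:ℝ) = (1/b) * b := by field_simp
    _ ≤ max 1 (1/b) * b := by gcongr; exact le_max_right _ _
  have h1 : (1 + n)^2 ≤ 2 * (1 + n^2) := by nlinarith [sq_nonneg (1-n)]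
  have h2 : 1 + n^2 ≤ max 1 (1/a) * (n^2 + a) := by nlinarith
  have h3 : 1 + n^2 ≤ max 1 (1/b) * (n^2 + b) := by nlinarith
  have h4 : (0:ℝ) ≤ 1 + n^2 := by positivity
  nlinarith [sq_nonneg (1+n), mul_le_mul h2 h3 h4 (by positivity : (0:ℝ) ≤ max 1 (1/a) * (n^2+a))]

noncomputable def Ff (a b r : ℝ) : ℝ :=
  (a - b) / (r ^ 2 + b) - Real.log ((r ^ 2 + a) / (r ^ 2 + b))

lemma cont_Ff (a b : ℝ) (ha : 0 < a) (hb : 0 < b) : Continuous (fun r : ℝ => Ff a b r) := by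
  unfold Ff
  have hub : ∀ r : ℝ, (0:ℝ) < r ^ 2 + b := fun r => by positivity
  have hua : ∀ r : ℝ, (0:ℝ) < r ^ 2 + a := fun r => by positivity
  apply Continuous.sub
  · exact continuous_const.div (by continuity) (fun r => (hub r).ne')
  · apply Continuous.log
    · exact Continuous.div (by continuity) (by continuity) (fun r => (hub r).ne')
    · intro r; positivity

lemma hasDeriv_G (a b : ℝ) (ha : 0 < a) (hb : 0 < b) (x : ℝ) :
    HasDerivAt (fun r : ℝ => (1/2) * ((r^2+a) * (Real.log (r^2+b) - Real.log (r^2+a))))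
      (x * Ff a b x) x := by
  have hub : (0:ℝ) < x ^ 2 + b := by positivity
  have hua : (0:ℝ) < x ^ 2 + a := by positivity
  have h2b : HasDerivAt (fun r : ℝ => r^2 + b) (2*x) x := by
    simpa using (hasDerivAt_pow 2 x).add_const b
  have h2a : HasDerivAt (fun r : ℝ => r^2 + a) (2*x) x := by
    simpa using (hasDerivAt_pow 2 x).add_const a
  have hlb := h2b.log hub.ne'
  have hla := h2a.log hua.ne'
  have h := (h2a.mul (hlb.sub hla)).const_mul (1/2 : ℝ)
  refine h.congr_deriv ?_
  simp only [Pi.sub_apply]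
  unfold Ff
  rw [Real.log_div hua.ne' hub.ne']
  field_simp
  ring

lemma tendsto_G (a b : ℝ) (ha : 0 < a) (hb : 0 < b) :
    Tendsto (fun r : ℝ => (1/2) * ((r^2+a) * (Real.log (r^2+b) - Real.log (r^2+a))))
      atTop (𝓝 ((b - a)/2)) := by
  have h0 : Tendsto (fun x : ℝ => x * Real.log (1 + (b-a)/x)) atTop (𝓝 (b-a)) :=
    Real.tendsto_mul_log_one_add_div_atTop (b-a)
  have h1 : Tendsto (fun r : ℝ => r^2 + a) atTop atTop :=
    tendsto_atTop_add_const_right _ a (tendsto_pow_atTop two_ne_zero)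
  have h2 := h0.comp h1
  have h3 : (fun r : ℝ => (r^2+a) * Real.log (1 + (b-a)/(r^2+a)))
      = fun r : ℝ => (r^2+a) * (Real.log (r^2+b) - Real.log (r^2+a)) := by
    funext r
    have hua : (0:ℝ) < r ^ 2 + a := by positivity
    have hub : (0:ℝ) < r ^ 2 + b := by positivity
    congr 1
    rw [show 1 + (b-a)/(r^2+a) = (r^2+b)/(r^2+a) by field_simp; ring]
    rw [Real.log_div hub.ne' hua.ne']
  have h4 : Tendsto (fun r : ℝ => (r^2+a) * (Real.log (r^2+b) - Real.log (r^2+a)))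
      atTop (𝓝 (b-a)) := by rw [← h3]; exact h2
  rw [show (b-a)/2 = (1/2) * (b-a) by ring]
  exact h4.const_mul (1/2)

lemma integrableOn_1d (a b : ℝ) (ha : 0 < a) (hb : 0 < b) :
    IntegrableOn (fun r : ℝ => r * Ff a b r) (Ioi 0) := by
  set C : ℝ := (a-b)^2 * (4 * max 1 (1/a) * max 1 (1/b)) with hC
  have hC0 : 0 ≤ C := by positivity
  have hint : Integrable (fun r : ℝ => C * (1 + ‖r‖) ^ (-(3:ℝ))) := by
    apply Integrable.const_mul
    apply integrable_one_add_norm (E := ℝ)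
    simp
  apply Integrable.mono' (hint.restrict (s := Ioi 0))
  · exact ((continuous_id.mul (cont_Ff a b ha hb)).aestronglyMeasurable).restrict
  · filter_upwards [ae_restrict_mem measurableSet_Ioi] with r hr
    have hr0 : (0:ℝ) < r := hr
    have hub : (0:ℝ) < r ^ 2 + b := by positivity
    have hua : (0:ℝ) < r ^ 2 + a := by positivity
    have h1 : |r * Ff a b r| ≤ r * ((a - b) ^ 2 / ((r ^ 2 + b) * (r ^ 2 + a))) := by
      rw [abs_mul, abs_of_pos hr0]
      exact mul_le_mul_of_nonneg_left (key_ineq a b ha hb r) hr0.le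
    have hgr := growth a b ha hb r hr0.le
    have h2 : r * ((a - b) ^ 2 / ((r ^ 2 + b) * (r ^ 2 + a))) ≤ C * (1 + r)^(-(3:ℝ)) := by
      rw [show ((1:ℝ)+r)^(-(3:ℝ)) = ((1+r)^(3:ℕ))⁻¹ by
        rw [← Real.rpow_natCast (1+r) 3, ← Real.rpow_neg (by positivity)]; norm_num]
      rw [mul_div_assoc', div_le_iff₀ (by positivity),
        show C * ((1+r)^(3:ℕ))⁻¹ * ((r^2+b)*(r^2+a)) = C*((r^2+b)*(r^2+a))/(1+r)^(3:ℕ) by ring,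
        le_div_iff₀ (by positivity)]
      calc r * (a-b)^2 * (1+r)^(3:ℕ) ≤ (a-b)^2 * (1+r)^(4:ℕ) := by
            have : r * (1+r)^(3:ℕ) ≤ (1+r)^(4:ℕ) := by nlinarith [pow_nonneg (by linarith : (0:ℝ) ≤ 1+r) 3]
            nlinarith [sq_nonneg (a-b), pow_nonneg (by linarith : (0:ℝ) ≤ 1+r) 3]
        _ ≤ C * ((r ^ 2 + b) * (r ^ 2 + a)) := by
            rw [hC]
            nlinarith [sq_nonneg (a-b)]
    calc |r * Ff a b r| ≤ C * (1 + r)^(-(3:ℝ)) := le_trans h1 h2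
      _ = C * (1 + ‖r‖)^(-(3:ℝ)) := by rw [Real.norm_eq_abs, abs_of_pos hr0]

lemma integral_1d (a b : ℝ) (ha : 0 < a) (hb : 0 < b) :
    ∫ r in Ioi (0:ℝ), r * Ff a b r
      = (1/2) * (b - a + a * (Real.log a - Real.log b)) := by
  have := integral_Ioi_of_hasDerivAt_of_tendsto'
    (f := fun r : ℝ => (1/2) * ((r^2+a) * (Real.log (r^2+b) - Real.log (r^2+a))))
    (f' := fun r : ℝ => r * Ff a b r) (a := 0)
    (fun x _ => hasDeriv_G a b ha hb x) (integrableOn_1d a b ha hb) (tendsto_G a b ha hb)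
  rw [this]
  norm_num
  ring

lemma gamma2 : Real.Gamma 2 = 1 := by
  rw [show (2:ℝ) = 1 + 1 by norm_num, Real.Gamma_add_one one_ne_zero, Real.Gamma_one]; ring

lemma ball2 : (volume (Metric.ball (0:EuclideanSpace ℝ (Fin 2)) 1)).toReal = π := by
  rw [EuclideanSpace.volume_ball]
  have hc : (Fintype.card (Fin 2) : ℝ) / 2 + 1 = 2 := by norm_num
  rw [hc, gamma2]
  simp [Real.sq_sqrt Real.pi_pos.le, ENNReal.toReal_ofReal Real.pi_pos.le]

lemma integrable2D (a b : ℝ) (ha : 0 < a) (hb : 0 < b) :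
    Integrable (fun p : EuclideanSpace ℝ (Fin 2) => Ff a b ‖p‖) := by
  set C : ℝ := (a-b)^2 * (4 * max 1 (1/a) * max 1 (1/b)) with hC
  have hint : Integrable (fun p : EuclideanSpace ℝ (Fin 2) => C * (1 + ‖p‖) ^ (-(4:ℝ))) := by
    apply Integrable.const_mul
    apply integrable_one_add_norm (E := EuclideanSpace ℝ (Fin 2))
    simp
    norm_num
  apply hint.mono'
  · exact ((cont_Ff a b ha hb).comp continuous_norm).aestronglyMeasurable
  · filter_upwards with p
    set n : ℝ := ‖p‖ with hn
    have hn0 : 0 ≤ n := norm_nonneg p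
    have hub : (0:ℝ) < n ^ 2 + b := by positivity
    have hua : (0:ℝ) < n ^ 2 + a := by positivity
    have h1 := key_ineq a b ha hb n
    have hgr := growth a b ha hb n hn0
    have h2 : (a - b) ^ 2 / ((n ^ 2 + b) * (n ^ 2 + a)) ≤ C * (1 + n)^(-(4:ℝ)) := by
      rw [show ((1:ℝ)+n)^(-(4:ℝ)) = ((1+n)^(4:ℕ))⁻¹ by
        rw [← Real.rpow_natCast (1+n) 4, ← Real.rpow_neg (by positivity)]; norm_num]
      rw [show C * ((1+n)^(4:ℕ))⁻¹ = C/(1+n)^(4:ℕ) by ring,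
        div_le_div_iff₀ (by positivity) (by positivity), hC]
      nlinarith [sq_nonneg (a-b)]
    calc ‖Ff a b n‖ = |Ff a b n| := rfl
      _ ≤ C * (1 + n)^(-(4:ℝ)) := le_trans h1 h2

lemma integral2D (a b : ℝ) (ha : 0 < a) (hb : 0 < b) :
    ∫ p : EuclideanSpace ℝ (Fin 2), Ff a b ‖p‖
      = π * (b - a + a * (Real.log a - Real.log b)) := by
  rw [MeasureTheory.integral_fun_norm_addHaar (volume : Measure (EuclideanSpace ℝ (Fin 2)))
    (fun r => Ff a b r)]
  have hdim : finrank ℝ (EuclideanSpace ℝ (Fin 2)) = 2 := by simp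
  rw [hdim, measureReal_def, ball2]
  have : ∫ y in Ioi (0:ℝ), y ^ (2 - 1) • Ff a b y = ∫ r in Ioi (0:ℝ), r * Ff a b r := by
    apply integral_congr_ae
    filter_upwards with y
    simp
  rw [this, integral_1d a b ha hb, nsmul_eq_mul, smul_eq_mul]
  push_cast
  ring

/-- The infinite-volume relative entropy density in two dimensions equals
`(1/(8π))(m₂² - m₁² + m₁² log(m₁²/m₂²))`. -/
theorem relEntropy_density_two_dim (m₁ m₂ : ℝ) (h₁ : 0 < m₁) (h₂ : 0 < m₂) :
    Integrable (fun p : EuclideanSpace ℝ (Fin 2) =>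
        (m₁ ^ 2 - m₂ ^ 2) / (‖p‖ ^ 2 + m₂ ^ 2)
          - Real.log ((‖p‖ ^ 2 + m₁ ^ 2) / (‖p‖ ^ 2 + m₂ ^ 2))) ∧
      (1 / 2) * ∫ p : EuclideanSpace ℝ (Fin 2), (1 / (2 * π) ^ 2) *
          ((m₁ ^ 2 - m₂ ^ 2) / (‖p‖ ^ 2 + m₂ ^ 2)
            - Real.log ((‖p‖ ^ 2 + m₁ ^ 2) / (‖p‖ ^ 2 + m₂ ^ 2)))
        = (1 / (8 * π)) * (m₂ ^ 2 - m₁ ^ 2 + m₁ ^ 2 * Real.log (m₁ ^ 2 / m₂ ^ 2)) := by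
  have ha : (0:ℝ) < m₁ ^ 2 := by positivity
  have hb : (0:ℝ) < m₂ ^ 2 := by positivity
  have hkey : (fun p : EuclideanSpace ℝ (Fin 2) =>
      (m₁ ^ 2 - m₂ ^ 2) / (‖p‖ ^ 2 + m₂ ^ 2)
        - Real.log ((‖p‖ ^ 2 + m₁ ^ 2) / (‖p‖ ^ 2 + m₂ ^ 2)))
      = fun p => Ff (m₁^2) (m₂^2) ‖p‖ := by funext p; rw [Ff]
  constructor
  · rw [hkey]; exact integrable2D _ _ ha hb
  · rw [show (fun p : EuclideanSpace ℝ (Fin 2) => (1 / (2 * π) ^ 2) *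
          ((m₁ ^ 2 - m₂ ^ 2) / (‖p‖ ^ 2 + m₂ ^ 2)
            - Real.log ((‖p‖ ^ 2 + m₁ ^ 2) / (‖p‖ ^ 2 + m₂ ^ 2))))
        = fun p => (1 / (2 * π) ^ 2) * Ff (m₁^2) (m₂^2) ‖p‖ by funext p; rw [Ff],
      MeasureTheory.integral_const_mul, integral2D _ _ ha hb,
      Real.log_div ha.ne' hb.ne']
    have hpi : π ≠ 0 := Real.pi_ne_zero
    field_simp
    ring
end

section
/- Let A = (A_{ij}) be an n × n positive semidefinite complex Hermitian matrix. Then the entrywise exponential matrix M with M_{ij} = exp(A_{ij}) is also positive semidefinite. -/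
open scoped ComplexOrder

open Matrix Finset

/-- Schur product theorem (quadratic form version): the Hadamard product of two
positive semidefinite complex matrices has nonnegative quadratic form. -/
private lemma schur_quad_nonneg {n : ℕ} (M N : Matrix (Fin n) (Fin n) ℂ)
    (hM : M.PosSemidef) (hN : N.PosSemidef) (x : Fin n → ℂ) :
    0 ≤ star x ⬝ᵥ (Matrix.of fun i j => M i j * N i j) *ᵥ x := by
  classical
  obtain ⟨B, hB⟩ : ∃ B : Matrix (Fin n) (Fin n) ℂ, M = Bᴴ * B := by
    open scoped MatrixOrder in exact CStarAlgebra.nonneg_iff_eq_star_mul_self.mp hM.nonneg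
  obtain ⟨C, hC⟩ : ∃ C : Matrix (Fin n) (Fin n) ℂ, N = Cᴴ * C := by
    open scoped MatrixOrder in exact CStarAlgebra.nonneg_iff_eq_star_mul_self.mp hN.nonneg
  have hobs : (Matrix.of fun i j => M i j * N i j) = M ⊙ N := rfl
  set S : Matrix (Fin n) (Fin n) ℂ := B * Matrix.diagonal x * Cᵀ with hS
  have key : star x ⬝ᵥ (M ⊙ N) *ᵥ x = Matrix.trace (Sᴴ * S) := by
    rw [Matrix.dotProduct_mulVec, Matrix.dotProduct_vecMul_hadamard]
    have e1 : Sᴴ * S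
        = (Cᵀ)ᴴ * (Matrix.diagonal (star x) * (Bᴴ * B) * (Matrix.diagonal x * Cᵀ)) := by
      simp [hS, Matrix.conjTranspose_mul, Matrix.diagonal_conjTranspose, Matrix.mul_assoc, hB]
    rw [e1, hB, hC]
    conv_rhs => rw [Matrix.trace_mul_comm]
    congr 1
    rw [Matrix.transpose_mul, Matrix.diagonal_transpose, Matrix.transpose_mul]
    have e2 : (Cᴴ)ᵀ = (Cᵀ)ᴴ := by
      ext i j; simp [Matrix.conjTranspose_apply, Matrix.transpose_apply]
    rw [e2]
    simp only [Matrix.mul_assoc]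
  rw [hobs, key, Matrix.trace]
  refine Finset.sum_nonneg fun j _ => ?_
  have : (Sᴴ * S).diag j = ∑ k, star (S k j) * S k j := by
    simp [Matrix.diag, Matrix.mul_apply, Matrix.conjTranspose_apply]
  rw [this]
  exact Finset.sum_nonneg fun k _ => star_mul_self_nonneg _

private lemma hadamard_posSemidef {n : ℕ} (M N : Matrix (Fin n) (Fin n) ℂ)
    (hM : M.PosSemidef) (hN : N.PosSemidef) :
    (Matrix.of fun i j => M i j * N i j).PosSemidef := by
  refine .of_dotProduct_mulVec_nonneg ?_ (fun x => schur_quad_nonneg M N hM hN x)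
  ext i j
  show star (M j i * N j i) = M i j * N i j
  rw [star_mul', ← Matrix.conjTranspose_apply M, ← Matrix.conjTranspose_apply N, hM.1, hN.1]

private lemma schur_pow_posSemidef {n : ℕ} (A : Matrix (Fin n) (Fin n) ℂ)
    (hA : A.PosSemidef) (k : ℕ) : (Matrix.of fun i j => (A i j) ^ k).PosSemidef := by
  induction k with
  | zero =>
    have h1 : (Matrix.of fun i j : Fin n => (A i j) ^ 0) = Matrix.of fun _ _ => (1 : ℂ) := by
      ext i j; simp
    rw [h1]
    refine Matrix.PosSemidef.of_dotProduct_mulVec_nonneg ?_ ?_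
    · ext i j; simp [Matrix.conjTranspose_apply]
    · intro x
      have h2 : star x ⬝ᵥ (Matrix.of fun _ _ : Fin n => (1 : ℂ)) *ᵥ x
          = star (∑ j, x j) * (∑ j, x j) := by
        simp [dotProduct, Matrix.mulVec, star_sum, Finset.sum_mul]
      rw [h2]
      exact star_mul_self_nonneg _
  | succ k ih =>
    have h1 : (Matrix.of fun i j => (A i j) ^ (k + 1))
        = Matrix.of fun i j =>
            (Matrix.of fun i j => (A i j) ^ k) i j * (Matrix.of fun i j => A i j) i j := by
      ext i j; simp [pow_succ]
    rw [h1]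
    exact hadamard_posSemidef _ _ ih (by exact hA)

/-- The entrywise exponential of a positive semidefinite Hermitian matrix is
positive semidefinite (Schur product theorem applied to the power series of `exp`). -/
theorem posSemidef_entrywise_exp {n : ℕ} (A : Matrix (Fin n) (Fin n) ℂ)
    (hA : A.PosSemidef) :
    (Matrix.of fun i j => Complex.exp (A i j)).PosSemidef := by
  classical
  have hexp : ∀ z : ℂ, Complex.exp z = ∑' k : ℕ, (k.factorial : ℂ)⁻¹ * z ^ k := by
    intro z
    rw [Complex.exp_eq_exp_ℂ, NormedSpace.exp_eq_tsum_div]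
    exact tsum_congr fun k => by rw [div_eq_mul_inv, mul_comm]
  refine Matrix.PosSemidef.of_dotProduct_mulVec_nonneg ?_ ?_
  · ext i j
    show star (Complex.exp (A j i)) = Complex.exp (A i j)
    have h : star (A j i) = A i j := by
      rw [← Matrix.conjTranspose_apply A, hA.1]
    rw [← h]
    exact (Complex.exp_conj _).symm
  · intro x
    set f : Fin n → Fin n → ℕ → ℂ :=
      fun i j k => star (x i) * ((k.factorial : ℂ)⁻¹ * (A i j) ^ k) * x j with hf
    have hsum : ∀ i j : Fin n, Summable (f i j) := by
      intro i j
      have h := NormedSpace.expSeries_div_summable (A i j)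
      have h2 : f i j = fun k => star (x i) * ((A i j) ^ k / (k.factorial : ℂ)) * x j := by
        funext k; rw [hf]; rw [div_eq_mul_inv]; ring
      rw [h2]
      exact (h.mul_left _).mul_right _
    have expand : star x ⬝ᵥ (Matrix.of fun i j => Complex.exp (A i j)) *ᵥ x
        = ∑ i, ∑ j, star (x i) * Complex.exp (A i j) * x j := by
      simp [dotProduct, Matrix.mulVec, Finset.mul_sum, mul_assoc]
    have step : ∀ i j : Fin n, star (x i) * Complex.exp (A i j) * x j = ∑' k : ℕ, f i j k := by
      intro i j
      rw [hexp (A i j), ← tsum_mul_left, ← tsum_mul_right]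
    have swap : ∑ i, ∑ j, ∑' k : ℕ, f i j k = ∑' k : ℕ, ∑ i, ∑ j, f i j k := by
      have h1 : ∀ i : Fin n, ∑ j, ∑' k : ℕ, f i j k = ∑' k : ℕ, ∑ j, f i j k :=
        fun i => (Summable.tsum_finsetSum fun j _ => hsum i j).symm
      simp_rw [h1]
      exact (Summable.tsum_finsetSum fun i _ => summable_sum fun j _ => hsum i j).symm
    rw [expand]
    simp only [step]
    rw [swap]
    refine tsum_nonneg fun k => ?_
    have hc : (0 : ℂ) ≤ (Complex.ofReal (k.factorial : ℝ)⁻¹) :=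
      Complex.zero_le_real.mpr (by positivity)
    have hterm : ∑ i, ∑ j, f i j k
        = (Complex.ofReal (k.factorial : ℝ)⁻¹) * (star x ⬝ᵥ (Matrix.of fun i j => (A i j) ^ k) *ᵥ x) := by
      have hcast : (Complex.ofReal (k.factorial : ℝ)⁻¹) = (k.factorial : ℂ)⁻¹ := by push_cast; ring
      have h3 : ∀ i j : Fin n, f i j k
          = (Complex.ofReal (k.factorial : ℝ)⁻¹) * (star (x i) * ((A i j) ^ k * x j)) := by
        intro i j; rw [hf, hcast]; ring
      simp_rw [h3, ← Finset.mul_sum]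
      congr 1
    rw [hterm]
    exact mul_nonneg hc ((schur_pow_posSemidef A hA k).dotProduct_mulVec_nonneg x)
end

section
/- Let a < b < c < d be real numbers and m > 0. For the 4 × 4 covariance matrix Σ_{AB} with entries Σ_{ij} = e^{−m|x_i − x_j|}/(2m), where (x₁, x₂, x₃, x₄) = (a, b, c, d), and the 2 × 2 blocks Σ_A (for points a, b) and Σ_B (for points c, d) defined analogously, one has (1/2) log( det Σ_A · det Σ_B / det Σ_{AB} ) = −(1/2) log(1 − e^{−2m(c−b)}). -/
set_option maxHeartbeats 2000000

theorem det_fin_four' (M : Matrix (Fin 4) (Fin 4) ℝ) : M.det =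
    M 0 0 * (M 1 1 * (M 2 2 * M 3 3 - M 2 3 * M 3 2)
      - M 1 2 * (M 2 1 * M 3 3 - M 2 3 * M 3 1)
      + M 1 3 * (M 2 1 * M 3 2 - M 2 2 * M 3 1))
  - M 0 1 * (M 1 0 * (M 2 2 * M 3 3 - M 2 3 * M 3 2)
      - M 1 2 * (M 2 0 * M 3 3 - M 2 3 * M 3 0)
      + M 1 3 * (M 2 0 * M 3 2 - M 2 2 * M 3 0))
  + M 0 2 * (M 1 0 * (M 2 1 * M 3 3 - M 2 3 * M 3 1)
      - M 1 1 * (M 2 0 * M 3 3 - M 2 3 * M 3 0)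
      + M 1 3 * (M 2 0 * M 3 1 - M 2 1 * M 3 0))
  - M 0 3 * (M 1 0 * (M 2 1 * M 3 2 - M 2 2 * M 3 1)
      - M 1 1 * (M 2 0 * M 3 2 - M 2 2 * M 3 0)
      + M 1 2 * (M 2 0 * M 3 1 - M 2 1 * M 3 0)) := by
  have h1 : (Fin.succ 2 : Fin 4) = 3 := rfl
  have h2 : (Fin.castSucc 2 : Fin 4) = 2 := rfl
  simp [Matrix.det_succ_row_zero, Fin.sum_univ_succ, Fin.succAbove, h1, h2]
  ring



/-- Mutual information between the boundary fields of `(a,b)` and `(c,d)` for the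
one-dimensional free scalar field of mass `m`: the log-determinant ratio equals
`-(1/2) log(1 - e^{-2m(c-b)})`. -/
theorem mutual_information_intervals (a b c d m : ℝ)
    (hab : a < b) (hbc : b < c) (hcd : c < d) (hm : 0 < m) :
    (1 / 2) * Real.log
        ((Matrix.of fun i j : Fin 2 =>
            Real.exp (-m * |![a, b] i - ![a, b] j|) / (2 * m)).det *
          (Matrix.of fun i j : Fin 2 =>
            Real.exp (-m * |![c, d] i - ![c, d] j|) / (2 * m)).det /
          (Matrix.of fun i j : Fin 4 =>
            Real.exp (-m * |![a, b, c, d] i - ![a, b, c, d] j|) / (2 * m)).det)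
      = -(1 / 2) * Real.log (1 - Real.exp (-2 * m * (c - b))) := by
  set u := Real.exp (-m * (b - a)) with hu
  set v := Real.exp (-m * (c - b)) with hv
  set w := Real.exp (-m * (d - c)) with hw
  -- abs simplifications
  have habs : ∀ x y : ℝ, x ≤ y → |x - y| = y - x := fun x y h => by
    rw [abs_sub_comm, abs_of_nonneg (by linarith)]
  have hzero : ∀ x : ℝ, Real.exp (-m * |x - x|) = 1 := fun x => by
    simp
  -- exp products
  have huv : Real.exp (-m * (c - a)) = u * v := by
    rw [hu, hv, ← Real.exp_add]; ring_nf
  have huvw : Real.exp (-m * (d - a)) = u * v * w := by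
    rw [hu, hv, hw, ← Real.exp_add, ← Real.exp_add]; ring_nf
  have hvw : Real.exp (-m * (d - b)) = v * w := by
    rw [hv, hw, ← Real.exp_add]; ring_nf
  have hm' : (2 : ℝ) * m ≠ 0 := by positivity
  have hu1 : u < 1 := Real.exp_lt_one_iff.mpr (by nlinarith)
  have hv1 : v < 1 := Real.exp_lt_one_iff.mpr (by nlinarith)
  have hw1 : w < 1 := Real.exp_lt_one_iff.mpr (by nlinarith)
  have hu0 : 0 < u := Real.exp_pos _
  have hv0 : 0 < v := Real.exp_pos _
  have hw0 : 0 < w := Real.exp_pos _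
  have hdetA : (Matrix.of fun i j : Fin 2 =>
      Real.exp (-m * |![a, b] i - ![a, b] j|) / (2 * m)).det
      = (1 - u ^ 2) / (2 * m) ^ 2 := by
    rw [Matrix.det_fin_two]
    simp only [Matrix.of_apply, Matrix.cons_val', Matrix.cons_val_zero, Matrix.cons_val_one,
      Matrix.head_cons, Matrix.empty_val', Matrix.cons_val_fin_one, Matrix.head_fin_const]
    rw [habs a b hab.le, abs_of_nonneg (by linarith : (0:ℝ) ≤ b - a)]
    have : Real.exp (-m * |a - a|) = 1 := hzero a
    rw [show |a - a| = 0 by simp, show |b - b| = 0 by simp]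
    simp only [mul_zero, Real.exp_zero, ← hu]
    field_simp
  have hdetB : (Matrix.of fun i j : Fin 2 =>
      Real.exp (-m * |![c, d] i - ![c, d] j|) / (2 * m)).det
      = (1 - w ^ 2) / (2 * m) ^ 2 := by
    rw [Matrix.det_fin_two]
    simp only [Matrix.of_apply, Matrix.cons_val', Matrix.cons_val_zero, Matrix.cons_val_one,
      Matrix.head_cons, Matrix.empty_val', Matrix.cons_val_fin_one, Matrix.head_fin_const]
    rw [habs c d hcd.le, abs_of_nonneg (by linarith : (0:ℝ) ≤ d - c)]
    rw [show |c - c| = 0 by simp, show |d - d| = 0 by simp]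
    simp only [mul_zero, Real.exp_zero, ← hw]
    field_simp
  have hdetAB : (Matrix.of fun i j : Fin 4 =>
      Real.exp (-m * |![a, b, c, d] i - ![a, b, c, d] j|) / (2 * m)).det
      = (1 - u ^ 2) * (1 - v ^ 2) * (1 - w ^ 2) / (2 * m) ^ 4 := by
    rw [det_fin_four']
    simp only [Matrix.of_apply, Matrix.cons_val', Matrix.cons_val_zero, Matrix.cons_val_one,
      Matrix.head_cons, Matrix.empty_val', Matrix.cons_val_fin_one, Matrix.head_fin_const,
      Matrix.cons_val_two, Matrix.tail_cons, Matrix.cons_val_three]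
    rw [show |a - a| = 0 by simp, show |b - b| = 0 by simp, show |c - c| = 0 by simp,
      show |d - d| = 0 by simp,
      habs a b hab.le, habs a c (by linarith), habs a d (by linarith),
      habs b c hbc.le, habs b d (by linarith), habs c d hcd.le,
      abs_of_nonneg (by linarith : (0:ℝ) ≤ b - a),
      abs_of_nonneg (by linarith : (0:ℝ) ≤ c - a),
      abs_of_nonneg (by linarith : (0:ℝ) ≤ d - a),
      abs_of_nonneg (by linarith : (0:ℝ) ≤ c - b),
      abs_of_nonneg (by linarith : (0:ℝ) ≤ d - b),
      abs_of_nonneg (by linarith : (0:ℝ) ≤ d - c)]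
    simp only [mul_zero, Real.exp_zero, huv, huvw, hvw, ← hu, ← hv, ← hw]
    field_simp
    ring
  rw [hdetA, hdetB, hdetAB]
  have h1u : (0:ℝ) < 1 - u ^ 2 := by nlinarith
  have h1v : (0:ℝ) < 1 - v ^ 2 := by nlinarith
  have h1w : (0:ℝ) < 1 - w ^ 2 := by nlinarith
  have hratio : (1 - u ^ 2) / (2 * m) ^ 2 * ((1 - w ^ 2) / (2 * m) ^ 2) /
      ((1 - u ^ 2) * (1 - v ^ 2) * (1 - w ^ 2) / (2 * m) ^ 4) = (1 - v ^ 2)⁻¹ := by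
    field_simp
  rw [hratio, Real.log_inv]
  have hv2 : v ^ 2 = Real.exp (-2 * m * (c - b)) := by
    rw [hv, ← Real.exp_nat_mul]
    ring_nf
  rw [hv2]
  ring
end
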